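/- arXiv:1511.04644 — 2 statements merged into one kernel-verified Lean document; each statement's English description precedes it below -/
import Mathlib

section
/- Let u(x,y) = (x²+y²)²/4 − (x²+y²)^{3/2} + (x²+y²). Then u is not a convex function on the disk B₂(0) = {(x,y) : x²+y² < 4}, even though u is positive on B₂(0) \ {0}. -/
open Real Set
noncomputable section

/-- Partial derivative in the first variable. -/
def pdx (u : ℝ × ℝ → ℝ) (p : ℝ × ℝ) : ℝ := deriv (fun x => u (x, p.2)) p.1
/-- Partial derivative in the second variable. -/
def pdy (u : ℝ × ℝ → ℝ) (p : ℝ × ℝ) : ℝ := deriv (fun y => u (p.1, y)) p.2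
/-- Laplacian on ℝ². -/
def lap2 (u : ℝ × ℝ → ℝ) (p : ℝ × ℝ) : ℝ := pdx (pdx u) p + pdy (pdy u) p
/-- Gradient on ℝ². -/
def grad2 (u : ℝ × ℝ → ℝ) (p : ℝ × ℝ) : ℝ × ℝ := (pdx u p, pdy u p)

/-- The counterexample function u(x,y) = (x²+y²)²/4 − (x²+y²)^{3/2} + (x²+y²). -/
def uex (p : ℝ × ℝ) : ℝ :=
  (p.1 ^ 2 + p.2 ^ 2) ^ 2 / 4 - (p.1 ^ 2 + p.2 ^ 2) ^ ((3 : ℝ) / 2) + (p.1 ^ 2 + p.2 ^ 2)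

lemma sq_rpow_three_halves (x : ℝ) (hx : 0 ≤ x) : (x ^ 2 : ℝ) ^ ((3 : ℝ) / 2) = x ^ 3 := by
  rw [← Real.rpow_natCast x 2, ← Real.rpow_mul hx]
  norm_num

lemma uex_on_axis (x : ℝ) (hx : 0 ≤ x) : uex (x, 0) = x ^ 4 / 4 - x ^ 3 + x ^ 2 := by
  simp only [uex]
  norm_num
  rw [sq_rpow_three_halves x hx]
  ring

/-- u is positive on B₂(0) \ {0} but not convex on B₂(0). -/
theorem stmt3 :
    (∀ p ∈ {q : ℝ × ℝ | q.1 ^ 2 + q.2 ^ 2 < 4}, p ≠ 0 → 0 < uex p) ∧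
      ¬ ConvexOn ℝ {q : ℝ × ℝ | q.1 ^ 2 + q.2 ^ 2 < 4} uex := by
  constructor
  · intro p hp hp0
    simp only [mem_setOf_eq] at hp
    set s : ℝ := p.1 ^ 2 + p.2 ^ 2 with hs
    have hs0 : 0 < s := by
      have hne : p.1 ≠ 0 ∨ p.2 ≠ 0 := by
        by_contra hc; push_neg at hc; exact hp0 (Prod.ext hc.1 hc.2)
      rcases hne with h | h <;> positivity
    set r : ℝ := Real.sqrt s with hr
    have hr0 : 0 < r := Real.sqrt_pos.2 hs0
    have hr2 : r ^ 2 = s := Real.sq_sqrt hs0.le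
    have hr4 : r < 2 := by
      rw [show (2:ℝ) = Real.sqrt 4 by rw [show (4:ℝ) = 2^2 by norm_num, Real.sqrt_sq]; norm_num]
      exact Real.sqrt_lt_sqrt (by positivity) hp
    have hrpow : s ^ ((3:ℝ)/2) = r ^ 3 := by rw [← hr2, sq_rpow_three_halves r hr0.le]
    have goal_eq : uex p = s ^ 2 / 4 - s ^ ((3:ℝ)/2) + s := rfl
    rw [goal_eq, hrpow, ← hr2]
    have hne : r * (r / 2 - 1) < 0 := mul_neg_of_pos_of_neg hr0 (by linarith)
    nlinarith [mul_pos (neg_pos.2 hne) (neg_pos.2 hne)]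
  · intro h
    have h1 : ((1/2 : ℝ), (0:ℝ)) ∈ {q : ℝ × ℝ | q.1 ^ 2 + q.2 ^ 2 < 4} := by
      simp only [mem_setOf_eq]; norm_num
    have h2 : ((3/2 : ℝ), (0:ℝ)) ∈ {q : ℝ × ℝ | q.1 ^ 2 + q.2 ^ 2 < 4} := by
      simp only [mem_setOf_eq]; norm_num
    have := h.2 h1 h2 (by norm_num : (0:ℝ) ≤ 1/2) (by norm_num : (0:ℝ) ≤ 1/2) (by norm_num)
    have hpt : (1/2 : ℝ) • ((1/2 : ℝ), (0:ℝ)) + (1/2 : ℝ) • ((3/2 : ℝ), (0:ℝ)) = ((1:ℝ), (0:ℝ)) := by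
      simp [Prod.ext_iff]; norm_num
    rw [hpt, uex_on_axis 1 (by norm_num), uex_on_axis (1/2) (by norm_num),
      uex_on_axis (3/2) (by norm_num)] at this
    norm_num at this
end
end

section
/- (Proposition 4) Let D ⊆ ℝⁿ be open, u ∈ C²(D) satisfy −Δu = f(u) on D for a continuous f: ℝ → ℝ, and let p ∈ D be an isolated local maximum of u in the sense that for every sufficiently small δ > 0 and all x ∈ B_δ(p) \ {p}, ∇u(x)·(x−p) < 0. Then f(u(p)) ≥ 0. -/
open MeasureTheory Real Set
open scoped RealInnerProductSpace
noncomputable section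

/-- Laplacian on Euclidean space: trace of the second derivative. -/
def lapE {n : ℕ} (u : EuclideanSpace ℝ (Fin n) → ℝ) (x : EuclideanSpace ℝ (Fin n)) : ℝ :=
  ∑ i, iteratedFDeriv ℝ 2 u x
    ![(EuclideanSpace.basisFun (Fin n) ℝ) i, (EuclideanSpace.basisFun (Fin n) ℝ) i]

abbrev E2 := EuclideanSpace ℝ (Fin 2)

open Filter Topology

/-- Proposition 4: at an isolated local maximum p (in the sense that
∇u·(x−p) < 0 near p), one has f(u(p)) ≥ 0. -/
theorem stmt5 {n : ℕ} (D : Set (EuclideanSpace ℝ (Fin n))) (hD : IsOpen D)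
    (u : EuclideanSpace ℝ (Fin n) → ℝ) (hu : ContDiffOn ℝ 2 u D)
    (f : ℝ → ℝ) (hf : Continuous f)
    (hpde : ∀ x ∈ D, -(lapE u x) = f (u x))
    (p : EuclideanSpace ℝ (Fin n)) (hp : p ∈ D)
    (hmax : ∃ δ > 0, Metric.ball p δ ⊆ D ∧
      ∀ x ∈ Metric.ball p δ, x ≠ p → ⟪gradient u x, x - p⟫ < 0) :
    0 ≤ f (u p) := by
  obtain ⟨δ, hδ, hball, hneg⟩ := hmax
  have hcd : ContDiffAt ℝ 2 u p := hu.contDiffAt (hD.mem_nhds hp)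
  have hF : ContDiffAt ℝ 1 (fderiv ℝ u) p := hcd.fderiv_right (by norm_num)
  have hFd : DifferentiableAt ℝ (fderiv ℝ u) p := hF.differentiableAt (by norm_num)
  have key : ∀ i, iteratedFDeriv ℝ 2 u p
      ![(EuclideanSpace.basisFun (Fin n) ℝ) i, (EuclideanSpace.basisFun (Fin n) ℝ) i] ≤ 0 := by
    intro i
    set v := (EuclideanSpace.basisFun (Fin n) ℝ) i with hv_def
    have hv : ‖v‖ = 1 := (EuclideanSpace.basisFun (Fin n) ℝ).orthonormal.1 i
    have hvne : v ≠ 0 := by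
      intro h; rw [h, norm_zero] at hv; norm_num at hv
    set h : ℝ → ℝ := fun t => fderiv ℝ u (p + t • v) v with hh
    -- derivative of the path
    have hγ : HasDerivAt (fun t : ℝ => p + t • v) v 0 := by
      simpa using ((hasDerivAt_id (0:ℝ)).smul_const v).const_add p
    have hγ0 : (fun t : ℝ => p + t • v) 0 = p := by simp
    set q : ℝ := fderiv ℝ (fderiv ℝ u) p v v with hq_def
    have hDh : HasDerivAt h q 0 := by
      have h1 : HasDerivAt (fun t : ℝ => fderiv ℝ u (p + t • v)) (fderiv ℝ (fderiv ℝ u) p v) 0 := by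
        have hFd' : HasFDerivAt (fderiv ℝ u) (fderiv ℝ (fderiv ℝ u) p)
            ((fun t : ℝ => p + t • v) 0) := by simpa using hFd.hasFDerivAt
        exact hFd'.comp_hasDerivAt (0:ℝ) hγ
      have h2 := (ContinuousLinearMap.apply ℝ ℝ v).hasFDerivAt.comp_hasDerivAt (0:ℝ) h1
      exact h2
    -- membership and sign facts
    have hmem : ∀ t : ℝ, |t| < δ → (p + t • v) ∈ Metric.ball p δ := by
      intro t ht
      rw [Metric.mem_ball, dist_eq_norm]
      simpa [norm_smul, hv] using ht
    have hsign : ∀ t : ℝ, t ≠ 0 → |t| < δ → t * h t < 0 := by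
      intro t ht0 htδ
      have hx : (p + t • v) ∈ Metric.ball p δ := hmem t htδ
      have hxne : p + t • v ≠ p := by
        intro hcon
        apply ht0
        have : t • v = 0 := by
          have := sub_eq_zero.mpr hcon
          simpa [add_sub_cancel_left] using this
        rcases smul_eq_zero.mp this with h'|h'
        · exact h'
        · exact absurd h' hvne
      have := hneg _ hx hxne
      have hxp : p + t • v - p = t • v := by abel
      rw [hxp, real_inner_smul_right] at this
      have hgrad : ⟪gradient u (p + t • v), v⟫ = h t := by
        simp only [hh, gradient]
        exact InnerProductSpace.toDual_symm_apply
      rwa [hgrad] at this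
    -- h 0 = 0
    have hcont : ContinuousAt h 0 := hDh.continuousAt
    have h0le : h 0 ≤ 0 := by
      have hev : ∀ᶠ t in 𝓝[>] (0:ℝ), h t ≤ 0 := by
        filter_upwards [Ioo_mem_nhdsGT_of_mem (by constructor <;> [rfl; exact hδ] :
          (0:ℝ) ∈ Ico 0 δ)] with t ht
        have := hsign t (ne_of_gt ht.1) (by rw [abs_of_pos ht.1]; exact ht.2)
        nlinarith [ht.1]
      exact le_of_tendsto (hcont.tendsto.mono_left nhdsWithin_le_nhds) hev
    have h0ge : 0 ≤ h 0 := by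
      have hev : ∀ᶠ t in 𝓝[<] (0:ℝ), 0 ≤ h t := by
        filter_upwards [Ioo_mem_nhdsLT_of_mem (by constructor <;> [exact neg_lt_zero.mpr hδ; rfl] :
          (0:ℝ) ∈ Ioc (-δ) 0)] with t ht
        have := hsign t (ne_of_lt ht.2) (by rw [abs_of_neg ht.2]; linarith [ht.1])
        nlinarith [ht.2]
      exact ge_of_tendsto (hcont.tendsto.mono_left nhdsWithin_le_nhds) hev
    have h00 : h 0 = 0 := le_antisymm h0le h0ge
    -- slope argument: q ≤ 0
    have hslope : Tendsto (slope h 0) (𝓝[≠] (0:ℝ)) (𝓝 q) :=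
      hasDerivAt_iff_tendsto_slope.mp hDh
    have hq_le : q ≤ 0 := by
      have hev : ∀ᶠ t in 𝓝[≠] (0:ℝ), slope h 0 t ≤ 0 := by
        have hb : Metric.ball (0:ℝ) δ ∈ 𝓝 (0:ℝ) := Metric.ball_mem_nhds _ hδ
        filter_upwards [inter_mem_nhdsWithin _ hb, self_mem_nhdsWithin] with t ht htne
        have htne' : t ≠ 0 := htne
        have htδ : |t| < δ := by simpa [Real.dist_eq] using ht.2
        have hs := hsign t htne' htδ
        rw [slope_def_field, h00, sub_zero, sub_zero]
        rcases mul_neg_iff.mp hs with ⟨htp, hhn⟩ | ⟨htn, hhp⟩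
        · exact le_of_lt (div_neg_of_neg_of_pos hhn htp)
        · exact le_of_lt (div_neg_of_pos_of_neg hhp htn)
      exact le_of_tendsto hslope hev
    have : q = iteratedFDeriv ℝ 2 u p ![v, v] := by
      rw [iteratedFDeriv_two_apply]
      simp [hq_def]
    linarith [this ▸ hq_le]
  have hlap : lapE u p ≤ 0 := Finset.sum_nonpos (fun i _ => key i)
  have := hpde p hp
  linarith
end
end
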